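/- Let X be a compact Hausdorff space, f : ℕ → X a function, and let {a_α : α < ω₁} be an almost disjoint family of infinite subsets of ℕ with the Luzin property: for every α < ω₁ and every n ∈ ℕ the set {β < α : a_β ∩ a_α ⊆ {0, 1, …, n−1}} is finite. Suppose for each α < ω₁ there is a point y_α ∈ X such that for every neighbourhood U of y_α the set {k ∈ a_α : f(k) ∉ U} is finite. Then there is a point x ∈ X such that the ω₁-sequence ⟨y_α : α < ω₁⟩ converges to x. -/

import Mathlib

open Ordinal Topology

/-- The first uncountable ordinal `ω₁`, as a (well-ordered) type. -/
abbrev Omega1 : Type := Ordinal.ToType (Ordinal.omega 1)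

/-- An `ω₁`-sequence converges to `p` if every neighbourhood of `p`
contains a tail of the sequence. -/
def ConvergesTo {X : Type*} [TopologicalSpace X] (x : Omega1 → X) (p : X) : Prop :=
  ∀ U ∈ nhds p, ∃ α : Omega1, ∀ β : Omega1, α ≤ β → x β ∈ U

section Stmt12Aux
open Filter Set Cardinal

noncomputable def omega1Iso : Set.Iio (ω_ 1) ≃o Omega1 := Ordinal.ToType.mk

instance : Nonempty Omega1 :=
  Ordinal.toType_nonempty_iff_ne_zero.2 (Ordinal.omega_pos 1).ne'

instance : NoMaxOrder Omega1 :=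
  Ordinal.toType_noMax_of_succ_lt fun _ h => (Cardinal.isSuccLimit_omega 1).succ_lt h

lemma countable_Iio_ordinal {o : Ordinal.{0}} (ho : o < ω_ 1) : (Set.Iio o).Countable := by
  have h1 : o.card ≤ ℵ₀ := by
    rw [← ord_aleph 1, Cardinal.lt_ord, ← Cardinal.succ_aleph0, Order.lt_succ_iff] at ho
    exact ho
  rw [← Set.countable_coe_iff, ← Cardinal.mk_le_aleph0_iff, Ordinal.mk_Iio_ordinal]
  simpa [← Ordinal.lift_card] using h1

lemma omega1_countable_Iio (α : Omega1) : (Set.Iio α).Countable := by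
  have hc := countable_Iio_ordinal (Set.mem_Iio.1 (omega1Iso.symm α).2)
  rw [← Set.countable_coe_iff] at hc ⊢
  have hinj : Function.Injective
      (fun β : Set.Iio α => (⟨(omega1Iso.symm β.1).1,
        by exact omega1Iso.symm.lt_iff_lt.2 β.2⟩ : Set.Iio ((omega1Iso.symm α : Set.Iio (ω_ 1)) : Ordinal))) := by
    intro β₁ β₂ h
    simp only [Subtype.mk.injEq] at h
    exact Subtype.ext (omega1Iso.symm.injective (Subtype.ext (Subtype.mk.inj h)))
  exact hinj.countable

lemma omega1_bdd_of_countable {S : Set Omega1} (hS : S.Countable) :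
    ∃ γ : Omega1, ∀ β ∈ S, β ≤ γ := by
  haveI : Countable S := hS.to_subtype
  set g : S → Ordinal := fun β => (omega1Iso.symm β.1 : Ordinal) with hg
  have hcard : #S < (ω_ 1).cof := by
    rw [Cardinal.isRegular_aleph_one.cof_omega_eq]
    exact (Cardinal.countable_iff_lt_aleph_one S).1 hS
  have hsup : iSup g < ω_ 1 := by
    refine Ordinal.iSup_lt_ord hcard fun i => ?_
    exact (omega1Iso.symm i.1).2
  refine ⟨omega1Iso ⟨iSup g, hsup⟩, fun β hβ => ?_⟩
  have h2 : omega1Iso.symm β ≤ ⟨iSup g, hsup⟩ := by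
    rw [← Subtype.coe_le_coe]
    exact Ordinal.le_iSup g ⟨β, hβ⟩
  have := omega1Iso.monotone h2
  rwa [OrderIso.apply_symm_apply] at this

lemma omega1_exists_gt_of_uncountable {S : Set Omega1} (hS : ¬ S.Countable) (γ : Omega1) :
    ∃ β ∈ S, γ < β := by
  by_contra h
  push_neg at h
  refine hS (((omega1_countable_Iio γ).union (Set.countable_singleton γ)).mono ?_)
  intro β hβ
  rcases lt_or_eq_of_le (h β hβ) with h' | h'
  · exact Or.inl h'
  · exact Or.inr h'

lemma omega1_not_countable_of_cofinal {S : Set Omega1} (h : ∀ α, ∃ β ∈ S, α ≤ β) :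
    ¬ S.Countable := by
  intro hc
  obtain ⟨γ, hγ⟩ := omega1_bdd_of_countable hc
  obtain ⟨γ', hγ'⟩ := exists_gt γ
  obtain ⟨β, hβS, hβ⟩ := h γ'
  exact absurd (hγ β hβS) (not_le.2 (hγ'.trans_le hβ))

end Stmt12Aux

open Filter Set Cardinal

/-- Given a Luzin almost disjoint family `⟨a_α : α < ω₁⟩` of infinite subsets of `ℕ`,
a map `f : ℕ → X` into a compact Hausdorff space, and points `y_α` to which the images
`f[a_α]` converge, the sequence `⟨y_α : α < ω₁⟩` converges. -/
theorem stmt12 {X : Type*} [TopologicalSpace X] [CompactSpace X] [T2Space X]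
    (f : ℕ → X) (a : Omega1 → Set ℕ)
    (hinf : ∀ α, (a α).Infinite)
    (had : ∀ α β : Omega1, α ≠ β → (a α ∩ a β).Finite)
    (hLuzin : ∀ (α : Omega1) (n : ℕ),
      Set.Finite {β : Omega1 | β < α ∧ a β ∩ a α ⊆ Set.Iio n})
    (y : Omega1 → X)
    (hy : ∀ α, ∀ U ∈ nhds (y α), Set.Finite {k ∈ a α | f k ∉ U}) :
    ∃ x : X, ConvergesTo y x := by
  obtain ⟨x, -, hx⟩ := isCompact_univ.exists_mapClusterPt (f := (Filter.atTop : Filter Omega1))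
    (u := y) (by simp)
  refine ⟨x, ?_⟩
  -- uniqueness of cluster points
  have key : ∀ p, MapClusterPt p Filter.atTop y → p = x := by
    intro p hp
    by_contra hne
    obtain ⟨U, V, hU, hV, hpU, hxV, hUV⟩ := t2_separation hne
    set W : Set ℕ := f ⁻¹' U with hWdef
    set A : Set Omega1 := {α | y α ∈ U} with hAdef
    set B : Set Omega1 := {α | y α ∈ V} with hBdef
    -- cofinality of A and B
    have hAcof : ∀ γ : Omega1, ∃ β ∈ A, γ ≤ β := by
      intro γ
      obtain ⟨β, hβ₁, hβ₂⟩ := (Filter.frequently_atTop.1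
        (mapClusterPt_iff_frequently.1 hp U (hU.mem_nhds hpU))) γ
      exact ⟨β, hβ₂, hβ₁⟩
    have hBcof : ∀ γ : Omega1, ∃ β ∈ B, γ ≤ β := by
      intro γ
      obtain ⟨β, hβ₁, hβ₂⟩ := (Filter.frequently_atTop.1
        (mapClusterPt_iff_frequently.1 hx V (hV.mem_nhds hxV))) γ
      exact ⟨β, hβ₂, hβ₁⟩
    have hA : ∀ α ∈ A, ∃ n : ℕ, a α \ W ⊆ Set.Iio n := by
      intro α hα
      have hsub : a α \ W ⊆ {k ∈ a α | f k ∉ U} := fun k hk => ⟨hk.1, hk.2⟩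
      obtain ⟨n, hn⟩ := ((hy α U (hU.mem_nhds hα)).subset hsub).bddAbove
      exact ⟨n + 1, fun k hk => Nat.lt_succ_of_le (hn hk)⟩
    have hB : ∀ β ∈ B, ∃ n : ℕ, a β ∩ W ⊆ Set.Iio n := by
      intro β hβ
      have hsub : a β ∩ W ⊆ {k ∈ a β | f k ∉ V} := by
        intro k hk
        refine ⟨hk.1, fun hkV => ?_⟩
        exact (Set.disjoint_iff.1 hUV) ⟨hk.2, hkV⟩
      obtain ⟨n, hn⟩ := ((hy β V (hV.mem_nhds hβ)).subset hsub).bddAbove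
      exact ⟨n + 1, fun k hk => Nat.lt_succ_of_le (hn hk)⟩
    -- pigeonhole: refine A and B to uncountable pieces with a uniform bound
    have hApiece : ∃ n₀ : ℕ, ¬ ({α ∈ A | a α \ W ⊆ Set.Iio n₀}).Countable := by
      by_contra h
      push_neg at h
      refine omega1_not_countable_of_cofinal hAcof ?_
      have : A ⊆ ⋃ n : ℕ, {α ∈ A | a α \ W ⊆ Set.Iio n} := by
        intro α hα
        obtain ⟨n, hn⟩ := hA α hα
        exact Set.mem_iUnion.2 ⟨n, hα, hn⟩
      exact (Set.countable_iUnion h).mono this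
    have hBpiece : ∃ n₁ : ℕ, ¬ ({β ∈ B | a β ∩ W ⊆ Set.Iio n₁}).Countable := by
      by_contra h
      push_neg at h
      refine omega1_not_countable_of_cofinal hBcof ?_
      have : B ⊆ ⋃ n : ℕ, {β ∈ B | a β ∩ W ⊆ Set.Iio n} := by
        intro β hβ
        obtain ⟨n, hn⟩ := hB β hβ
        exact Set.mem_iUnion.2 ⟨n, hβ, hn⟩
      exact (Set.countable_iUnion h).mono this
    obtain ⟨n₀, hn₀⟩ := hApiece
    obtain ⟨n₁, hn₁⟩ := hBpiece
    set A' : Set Omega1 := {α ∈ A | a α \ W ⊆ Set.Iio n₀} with hA'def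
    set B' : Set Omega1 := {β ∈ B | a β ∩ W ⊆ Set.Iio n₁} with hB'def
    set n : ℕ := max n₀ n₁ with hndef
    have hkey : ∀ α ∈ A', ∀ β ∈ B', a β ∩ a α ⊆ Set.Iio n := by
      intro α hα β hβ k hk
      by_contra hkn
      rw [Set.mem_Iio, not_lt] at hkn
      have hkW : k ∈ W := by
        by_contra hkW
        have : k ∈ a α \ W := ⟨hk.2, hkW⟩
        exact absurd (hα.2 this) (by simp [Set.mem_Iio]; omega)
      have : k ∈ a β ∩ W := ⟨hk.1, hkW⟩
      exact absurd (hβ.2 this) (by simp [Set.mem_Iio]; omega)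
    -- take a countably infinite subset of B'
    have hB'inf : B'.Infinite := fun hfin => hn₁ hfin.countable
    set e := hB'inf.natEmbedding B' with hedef
    set T : Set Omega1 := Set.range (fun i : ℕ => (e i : Omega1)) with hTdef
    have hTsub : T ⊆ B' := by
      rintro β ⟨i, rfl⟩
      exact (e i).2
    have hTinf : T.Infinite :=
      Set.infinite_range_of_injective (fun i j hij => e.injective (Subtype.ext hij))
    obtain ⟨γ, hγ⟩ := omega1_bdd_of_countable (Set.countable_range (fun i : ℕ => (e i : Omega1)))
    obtain ⟨α, hαA', hγα⟩ := omega1_exists_gt_of_uncountable hn₀ γ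
    have hTfin : T ⊆ {β : Omega1 | β < α ∧ a β ∩ a α ⊆ Set.Iio n} := by
      intro β hβ
      exact ⟨(hγ β hβ).trans_lt hγα, hkey α hαA' β (hTsub hβ)⟩
    exact hTinf ((hLuzin α n).subset hTfin)
  have htendsto : Filter.Tendsto y Filter.atTop (nhds x) :=
    isCompact_univ.tendsto_nhds_of_unique_mapClusterPt
      (Filter.Eventually.of_forall fun _ => trivial) (fun z _ hz => key z hz)
  intro U hU
  exact Filter.eventually_atTop.1 (htendsto hU)
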